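/- For each odd positive integer i, the polynomial p_i(y) = Σ_{n=0}^{(i-1)/2} (-1)^n C(i,2n) y^{2n} (1-y^2)^{(i-1)/2-n} has degree exactly i-1 and leading coefficient 2^{i-1} (-1)^{(i-1)/2}. -/

import Mathlib

open Polynomial Finset

lemma sum_pair (f : ℕ → ℝ) (m : ℕ) :
    ∑ k ∈ range (2 * m), f k = ∑ n ∈ range m, (f (2 * n) + f (2 * n + 1)) := by
  induction m with
  | zero => simp
  | succ m ih =>
      rw [Nat.mul_succ, Finset.sum_range_succ, Finset.sum_range_succ, Finset.sum_range_succ, ← ih]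
      ring_nf

lemma even_choose_sum (m : ℕ) :
    ∑ n ∈ range (m + 1), ((2 * m + 1).choose (2 * n) : ℝ) = 2 ^ (2 * m) := by
  have hA : ∑ k ∈ range (2 * m + 2), ((2 * m + 1).choose k : ℝ) = 2 ^ (2 * m + 1) := by
    exact_mod_cast congrArg (Nat.cast : ℕ → ℝ) (Nat.sum_range_choose (2 * m + 1))
  have hB : ∑ k ∈ range (2 * m + 2), ((-1 : ℝ) ^ k * ((2 * m + 1).choose k : ℝ)) = 0 := by
    have := Int.alternating_sum_range_choose_of_ne (n := 2 * m + 1) (by omega)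
    have := congrArg (Int.cast : ℤ → ℝ) this
    push_cast at this
    simpa using this
  have key : ∑ k ∈ range (2 * (m + 1)), ((1 + (-1 : ℝ) ^ k) * ((2 * m + 1).choose k : ℝ))
      = 2 ^ (2 * m + 1) := by
    have : (2 : ℕ) * (m + 1) = 2 * m + 2 := by ring
    rw [this]
    simp_rw [add_mul, one_mul, Finset.sum_add_distrib, hA, hB, add_zero]
  rw [sum_pair] at key
  have : ∀ n ∈ range (m + 1),
      ((1 + (-1 : ℝ) ^ (2 * n)) * ((2 * m + 1).choose (2 * n) : ℝ)
        + (1 + (-1 : ℝ) ^ (2 * n + 1)) * ((2 * m + 1).choose (2 * n + 1) : ℝ))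
      = 2 * ((2 * m + 1).choose (2 * n) : ℝ) := by
    intro n _
    rw [pow_succ]
    simp only [pow_mul, neg_one_sq, one_pow]
    ring
  rw [Finset.sum_congr rfl this, ← Finset.mul_sum] at key
  have h2 : (2 : ℝ) ^ (2 * m + 1) = 2 * 2 ^ (2 * m) := by ring
  rw [h2] at key
  linarith [key]

lemma q_natDegree : ((1 : ℝ[X]) - X ^ 2).natDegree = 2 := by
  have : (1 : ℝ[X]) - X ^ 2 = -(X ^ 2 - C 1) := by rw [Polynomial.C_1]; ring
  rw [this, natDegree_neg, natDegree_X_pow_sub_C]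

lemma q_leadingCoeff : ((1 : ℝ[X]) - X ^ 2).leadingCoeff = -1 := by
  have : (1 : ℝ[X]) - X ^ 2 = -(X ^ 2 - C 1) := by rw [Polynomial.C_1]; ring
  rw [this, leadingCoeff_neg, (monic_X_pow_sub_C (1 : ℝ) (by norm_num)).leadingCoeff]

theorem p_odd_degree_leadingCoeff (i : ℕ) (hi : Odd i) (hpos : 0 < i) :
    let p : Polynomial ℝ :=
      ∑ n ∈ Finset.range ((i - 1) / 2 + 1),
        Polynomial.C ((-1 : ℝ) ^ n * (i.choose (2 * n))) * Polynomial.X ^ (2 * n) *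
          (1 - Polynomial.X ^ 2) ^ ((i - 1) / 2 - n)
    p.natDegree = i - 1 ∧ p.leadingCoeff = 2 ^ (i - 1) * (-1 : ℝ) ^ ((i - 1) / 2) := by
  intro p
  obtain ⟨m, hm⟩ := hi
  have him : i - 1 = 2 * m := by omega
  have hm2 : (i - 1) / 2 = m := by omega
  set q : ℝ[X] := 1 - X ^ 2 with hq
  -- natDegree of each term ≤ 2*m
  have hdeg : ∀ n ∈ Finset.range (m + 1),
      (C ((-1 : ℝ) ^ n * (i.choose (2 * n))) * X ^ (2 * n) * q ^ (m - n)).natDegree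
        ≤ 2 * m := by
    intro n hn
    simp only [Finset.mem_range] at hn
    calc (C ((-1 : ℝ) ^ n * (i.choose (2 * n))) * X ^ (2 * n) * q ^ (m - n)).natDegree
        ≤ (C ((-1 : ℝ) ^ n * (i.choose (2 * n))) * X ^ (2 * n)).natDegree
            + (q ^ (m - n)).natDegree := natDegree_mul_le
      _ ≤ (C ((-1 : ℝ) ^ n * (i.choose (2 * n)))).natDegree + (X ^ (2 * n) : ℝ[X]).natDegree
            + (q ^ (m - n)).natDegree := by gcongr; exact natDegree_mul_le
      _ ≤ 2 * m := by
          rw [natDegree_C, natDegree_X_pow, natDegree_pow, q_natDegree]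
          omega
  -- coefficient of p at 2*m
  have hcoeff : p.coeff (2 * m) = (-1 : ℝ) ^ m * 2 ^ (2 * m) := by
    have : p.coeff (2 * m)
        = ∑ n ∈ Finset.range (m + 1),
            (C ((-1 : ℝ) ^ n * (i.choose (2 * n))) * X ^ (2 * n) * q ^ (m - n)).coeff (2 * m) := by
      rw [show p = ∑ n ∈ Finset.range (m + 1),
            C ((-1 : ℝ) ^ n * (i.choose (2 * n))) * X ^ (2 * n) * q ^ (m - n) by
          simp only [p, hm2, hq]]
      exact finset_sum_coeff _ _ _
    rw [this]
    have hterm : ∀ n ∈ Finset.range (m + 1),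
        (C ((-1 : ℝ) ^ n * (i.choose (2 * n))) * X ^ (2 * n) * q ^ (m - n)).coeff (2 * m)
          = (-1 : ℝ) ^ m * (i.choose (2 * n)) := by
      intro n hn
      simp only [Finset.mem_range] at hn
      have hnm : n ≤ m := by omega
      have h2m : 2 * m = 2 * (m - n) + 2 * n := by omega
      rw [mul_assoc, coeff_C_mul, h2m, coeff_X_pow_mul]
      have hqdeg : (q ^ (m - n)).natDegree = 2 * (m - n) := by
        rw [natDegree_pow, q_natDegree]; ring
      have : (q ^ (m - n)).coeff (2 * (m - n)) = (q ^ (m - n)).leadingCoeff := by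
        rw [← hqdeg]; rfl
      rw [this, leadingCoeff_pow, q_leadingCoeff]
      rw [show ((-1 : ℝ) ^ n * (i.choose (2 * n)) * (-1) ^ (m - n))
            = ((-1 : ℝ) ^ n * (-1) ^ (m - n)) * (i.choose (2 * n)) by ring,
          ← pow_add, show n + (m - n) = m by omega]
    rw [Finset.sum_congr rfl hterm, ← Finset.mul_sum]
    congr 1
    rw [show i = 2 * m + 1 by omega]
    exact even_choose_sum m
  have hne : p.coeff (2 * m) ≠ 0 := by
    rw [hcoeff]
    positivity
  have hle : p.natDegree ≤ 2 * m := by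
    apply Polynomial.natDegree_sum_le_of_forall_le
    intro n hn
    rw [hm2] at hn
    rw [hm2]
    exact hdeg n hn
  have hdegp : p.natDegree = 2 * m :=
    le_antisymm hle (le_natDegree_of_ne_zero hne)
  refine ⟨by omega, ?_⟩
  rw [Polynomial.leadingCoeff, hdegp, hcoeff, him,
      Nat.mul_div_cancel_left m (by norm_num : 0 < 2)]
  ring
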